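/- arXiv:1602.05914 — 3 statements merged into one kernel-verified Lean document; each statement's English description precedes it below -/
import Mathlib

section
/- Let X_1,…,X_n be independent random variables such that X_i takes the value b_i with probability p and the value 0 with probability 1 − p, where 0 ≤ b_i ≤ l for every i and l > 0. Let X = Σ_i X_i and μ = E[X] = p·Σ_i b_i. Then for every α > 0, Pr[|X − μ| > α·μ] ≤ 2·exp(−2·α²·p·μ / l). -/
open MeasureTheory ProbabilityTheory

section Aux
open Real

private lemma bern_mgf_le (p : ℝ) (hp0 : 0 ≤ p) (hp1 : p ≤ 1) (u : ℝ) :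
    1 - p + p * Real.exp u ≤ Real.exp (p * u + u ^ 2 / 8) := by
  set D : ℝ → ℝ := fun u => 1 - p + p * Real.exp u with hDdef
  have hD : ∀ u, 0 < D u := by
    intro u
    rcases eq_or_lt_of_le hp0 with h | h
    · simp [hDdef, ← h]
    · have := mul_pos h (Real.exp_pos u)
      simp only [hDdef]; linarith
  have hD' : ∀ u, HasDerivAt D (p * Real.exp u) u := fun u =>
    (((Real.hasDerivAt_exp u).const_mul p).const_add (1 - p))
  set g : ℝ → ℝ := fun u => p * Real.exp u / D u with hgdef
  have hg01 : ∀ u, 0 ≤ g u ∧ g u ≤ 1 := by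
    intro u
    have h1 : 0 ≤ p * Real.exp u := mul_nonneg hp0 (Real.exp_pos u).le
    constructor
    · exact div_nonneg h1 (hD u).le
    · rw [hgdef, div_le_one (hD u)]
      simp only [hDdef]; linarith
  set f' : ℝ → ℝ := fun u => p + u / 4 - g u with hf'def
  have hf'deriv : ∀ u, HasDerivAt f' (1 / 4 - g u * (1 - g u)) u := by
    intro u
    have hgd : HasDerivAt g (g u * (1 - g u)) u := by
      have hN : HasDerivAt (fun u => p * Real.exp u) (p * Real.exp u) u :=
        (Real.hasDerivAt_exp u).const_mul p
      have h := hN.div (hD' u) (hD u).ne'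
      refine h.congr_deriv ?_
      simp only [hgdef]
      have := (hD u).ne'
      field_simp
    have h1 : HasDerivAt (fun u : ℝ => p + u / 4) (1 / 4) u :=
      ((hasDerivAt_id u).div_const 4).const_add p
    exact h1.sub hgd
  have hf'mono : Monotone f' := by
    apply monotone_of_deriv_nonneg
    · exact fun u => ((hf'deriv u).differentiableAt)
    · intro u
      rw [(hf'deriv u).deriv]
      have := hg01 u
      nlinarith [this.1, this.2, sq_nonneg (g u - 1 / 2)]
  have hf'0 : f' 0 = 0 := by
    simp only [hf'def, hgdef, hDdef]
    simp
  set F : ℝ → ℝ := fun u => p * u + u ^ 2 / 8 - Real.log (D u) with hFdef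
  have hFderiv : ∀ u, HasDerivAt F (f' u) u := by
    intro u
    have hlog : HasDerivAt (fun u => Real.log (D u)) (p * Real.exp u / D u) u :=
      (hD' u).log (hD u).ne'
    have h1 : HasDerivAt (fun u : ℝ => p * u + u ^ 2 / 8) (p + u / 4) u := by
      have := ((hasDerivAt_pow 2 u).div_const 8).const_add 0
      have h2 : HasDerivAt (fun u : ℝ => p * u) p u := by
        simpa using (hasDerivAt_id u).const_mul p
      have h3 : HasDerivAt (fun u : ℝ => u ^ 2 / 8) (u / 4) u := by
        have := (hasDerivAt_pow 2 u).div_const 8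
        exact this.congr_deriv (by norm_num; ring)
      exact h2.add h3
    exact h1.sub hlog
  have hF0 : F 0 = 0 := by simp [hFdef, hDdef]
  have key : ∀ u, 0 ≤ F u := by
    intro u
    rcases le_total 0 u with h | h
    · have hmono : MonotoneOn F (Set.Ici 0) := by
        apply monotoneOn_of_deriv_nonneg (convex_Ici 0)
        · exact (fun x _ => (hFderiv x).differentiableAt.continuousAt.continuousWithinAt)
        · exact fun x hx => ((hFderiv x).differentiableAt).differentiableWithinAt
        · intro x hx
          rw [(hFderiv x).deriv]
          rw [interior_Ici] at hx
          have := hf'mono (le_of_lt hx)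
          rwa [hf'0] at this
      have := hmono (by simp : (0:ℝ) ∈ Set.Ici 0) (by simpa : u ∈ Set.Ici 0) h
      rwa [hF0] at this
    · have hmono : AntitoneOn F (Set.Iic 0) := by
        apply antitoneOn_of_deriv_nonpos (convex_Iic 0)
        · exact (fun x _ => (hFderiv x).differentiableAt.continuousAt.continuousWithinAt)
        · exact fun x hx => ((hFderiv x).differentiableAt).differentiableWithinAt
        · intro x hx
          rw [(hFderiv x).deriv]
          rw [interior_Iic] at hx
          have := hf'mono (le_of_lt hx)
          rwa [hf'0] at this
      have := hmono (by simpa : u ∈ Set.Iic 0) (by simp : (0:ℝ) ∈ Set.Iic 0) h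
      rwa [hF0] at this
  have := key u
  have hlog : Real.log (D u) ≤ p * u + u ^ 2 / 8 := by
    simp only [hFdef] at this; linarith
  exact (Real.log_le_iff_le_exp (hD u)).mp hlog

private lemma bern_integral {Ω : Type*} [MeasurableSpace Ω] (μ : Measure Ω) [IsProbabilityMeasure μ]
    (p : ℝ) (hp0 : 0 ≤ p) (hp1 : p ≤ 1) (ξ : Ω → ℝ) (hm : Measurable ξ)
    (h1 : μ {ω | ξ ω = 1} = ENNReal.ofReal p)
    (h0 : μ {ω | ξ ω = 0} = ENNReal.ofReal (1 - p)) (c : ℝ) :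
    Integrable (fun ω => Real.exp (c * ξ ω)) μ ∧
      ∫ ω, Real.exp (c * ξ ω) ∂μ = 1 - p + p * Real.exp c := by
  set A : Set Ω := {ω | ξ ω = 1} with hAdef
  set B : Set Ω := {ω | ξ ω = 0} with hBdef
  have hAm : MeasurableSet A := hm (measurableSet_singleton 1)
  have hBm : MeasurableSet B := hm (measurableSet_singleton 0)
  have hdisj : Disjoint A B := by
    rw [Set.disjoint_left]
    intro ω hA hB
    simp only [hAdef, hBdef, Set.mem_setOf_eq] at hA hB
    rw [hA] at hB; norm_num at hB
  have hunion : μ (A ∪ B) = 1 := by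
    rw [measure_union hdisj hBm, h1, h0, ← ENNReal.ofReal_add hp0 (by linarith)]
    norm_num
  have hae : ∀ᵐ ω ∂μ, ω ∈ A ∪ B := by
    have hcompl : μ (A ∪ B)ᶜ = 0 := by
      rw [measure_compl (hAm.union hBm) (measure_ne_top _ _), hunion, measure_univ]
      simp
    exact (MeasureTheory.ae_iff.mpr hcompl)
  set g : Ω → ℝ := fun ω => A.indicator (fun _ => Real.exp c - 1) ω + 1 with hgdef
  have h_eq : (fun ω => Real.exp (c * ξ ω)) =ᵐ[μ] g := by
    filter_upwards [hae] with ω hω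
    rcases hω with h | h
    · simp only [hAdef, Set.mem_setOf_eq] at h
      simp [hgdef, h, Set.indicator_of_mem, hAdef, Set.mem_setOf_eq]
    · simp only [hBdef, Set.mem_setOf_eq] at h
      have hnA : ω ∉ A := by
        simp only [hAdef, Set.mem_setOf_eq, h]; norm_num
      simp [hgdef, h, Set.indicator_of_notMem hnA]
  have hg_int : Integrable g μ := by
    apply Integrable.add _ (integrable_const 1)
    exact (integrable_const _).indicator hAm
  constructor
  · exact hg_int.congr h_eq.symm
  · rw [integral_congr_ae h_eq, hgdef]
    rw [integral_add ((integrable_const _).indicator hAm) (integrable_const 1)]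
    rw [integral_indicator_const _ hAm, integral_const, measureReal_def, h1,
      ENNReal.toReal_ofReal hp0]
    simp
    ring

end Aux

/-- **Weighted Chernoff-type corollary of the Hoeffding bound.**
Let `X 1, …, X n` be independent random variables such that `X i` takes the value `b i` with
probability `p` and the value `0` with probability `1 - p`, where `0 ≤ b i ≤ l` for every `i`
and `l > 0`.  (We model this by writing `X i = b i * ξ i` with `ξ i` independent Bernoulli(p)
indicators.)  Let `X = ∑ i, X i` and `μX = E[X] = p * ∑ i, b i`.  Then for every `α > 0`,
`Pr[|X - μX| > α * μX] ≤ 2 * exp (- 2 * α ^ 2 * p * μX / l)`. -/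
theorem stmt_1 {Ω : Type*} [MeasurableSpace Ω] (μ : Measure Ω) [IsProbabilityMeasure μ]
    (n : ℕ) (b : Fin n → ℝ) (l : ℝ) (hl : 0 < l)
    (hb0 : ∀ i, 0 ≤ b i) (hbl : ∀ i, b i ≤ l)
    (p : ℝ) (hp0 : 0 ≤ p) (hp1 : p ≤ 1)
    (ξ : Fin n → Ω → ℝ) (hmeas : ∀ i, Measurable (ξ i))
    (hindep : iIndepFun ξ μ)
    (h1 : ∀ i, μ {ω | ξ i ω = 1} = ENNReal.ofReal p)
    (h0 : ∀ i, μ {ω | ξ i ω = 0} = ENNReal.ofReal (1 - p))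
    (X : Fin n → Ω → ℝ) (hX : ∀ i ω, X i ω = b i * ξ i ω)
    (μX : ℝ) (hμX : μX = p * ∑ i, b i)
    (α : ℝ) (hα : 0 < α) :
    μ {ω | α * μX < |(∑ i, X i ω) - μX|} ≤
      ENNReal.ofReal (2 * Real.exp (-(2 * α ^ 2 * p * μX) / l)) := by
  classical
  set Sb : ℝ := ∑ i, b i with hSbdef
  set B2 : ℝ := ∑ i, (b i) ^ 2 with hB2def
  have hSb0 : 0 ≤ Sb := Finset.sum_nonneg fun i _ => hb0 i
  have hB2_le : B2 ≤ l * Sb := by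
    rw [hB2def, hSbdef, Finset.mul_sum]
    refine Finset.sum_le_sum fun i _ => ?_
    have := mul_le_mul_of_nonneg_right (hbl i) (hb0 i)
    nlinarith [hb0 i, hbl i]
  have hXmeas : ∀ i, Measurable (X i) := by
    intro i
    have : X i = fun ω => b i * ξ i ω := funext (hX i)
    rw [this]
    exact (hmeas i).const_mul _
  have hindepX : iIndepFun X μ := by
    have hXc : X = fun i => (fun x => b i * x) ∘ ξ i := by
      funext i ω; exact hX i ω
    rw [hXc]
    exact hindep.comp _ (fun i => measurable_const_mul _)
  -- per-i integrability and mgf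
  have hint : ∀ (t : ℝ) (i : Fin n),
      Integrable (fun ω => Real.exp (t * X i ω)) μ ∧
        mgf (X i) μ t = 1 - p + p * Real.exp (t * b i) := by
    intro t i
    have h := bern_integral μ p hp0 hp1 (ξ i) (hmeas i) (h1 i) (h0 i) (t * b i)
    have hfeq : (fun ω => Real.exp (t * X i ω)) = fun ω => Real.exp ((t * b i) * ξ i ω) := by
      funext ω; rw [hX]; ring_nf
    constructor
    · rw [hfeq]; exact h.1
    · rw [mgf, hfeq]; exact h.2
  have hexp_int : ∀ t : ℝ, Integrable (fun ω => Real.exp (t * (∑ i, X i) ω)) μ := fun t =>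
    iIndepFun.integrable_exp_mul_sum hindepX hXmeas (fun i _ => (hint t i).1)
  have hmgf_le : ∀ t : ℝ, mgf (∑ i, X i) μ t ≤ Real.exp (t * μX + t ^ 2 * B2 / 8) := by
    intro t
    rw [hindepX.mgf_sum hXmeas Finset.univ]
    have step1 : ∏ i, mgf (X i) μ t ≤ ∏ i, Real.exp (p * (t * b i) + (t * b i) ^ 2 / 8) := by
      refine Finset.prod_le_prod (fun i _ => ?_) (fun i _ => ?_)
      · rw [(hint t i).2]
        have := Real.exp_pos (t * b i)
        nlinarith [mul_nonneg hp0 (Real.exp_pos (t * b i)).le]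
      · rw [(hint t i).2]
        exact bern_mgf_le p hp0 hp1 (t * b i)
    refine step1.trans ?_
    rw [← Real.exp_sum]
    apply Real.exp_le_exp.mpr
    have hsum : ∑ i, (p * (t * b i) + (t * b i) ^ 2 / 8) = t * μX + t ^ 2 * B2 / 8 := by
      have e1 : ∀ i : Fin n, p * (t * b i) + (t * b i) ^ 2 / 8
          = (t * p) * b i + (t ^ 2 / 8) * b i ^ 2 := fun i => by ring
      simp_rw [e1]
      rw [Finset.sum_add_distrib, ← Finset.mul_sum, ← Finset.mul_sum, ← hSbdef, ← hB2def, hμX]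
      ring
    exact le_of_eq hsum
  -- trivial case
  by_cases hcase : μX = 0
  · refine le_trans prob_le_one ?_
    rw [hcase]
    simp only [mul_zero, neg_zero, zero_div, Real.exp_zero, mul_one]
    exact ENNReal.one_le_ofReal.mpr (by norm_num)
  · have hμX0 : 0 ≤ μX := by rw [hμX]; exact mul_nonneg hp0 hSb0
    have hμXpos : 0 < μX := lt_of_le_of_ne hμX0 (Ne.symm hcase)
    have hppos : 0 < p := by
      rcases eq_or_lt_of_le hp0 with h | h
      · exfalso; apply hcase; rw [hμX, ← h, zero_mul]
      · exact h
    have hSbpos : 0 < Sb := by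
      rcases eq_or_lt_of_le hSb0 with h | h
      · exfalso; apply hcase; rw [hμX, ← h, mul_zero]
      · exact h
    have hB2pos : 0 < B2 := by
      obtain ⟨i, hi⟩ : ∃ i, 0 < b i := by
        by_contra h
        push_neg at h
        have : Sb = 0 := le_antisymm (Finset.sum_nonpos fun i _ => h i) hSb0
        linarith
      have := Finset.single_le_sum (fun j (_ : j ∈ Finset.univ) => sq_nonneg (b j))
        (Finset.mem_univ i)
      rw [← hB2def] at this
      nlinarith
    set t : ℝ := 4 * α * μX / B2 with htdef
    have ht0 : 0 < t := by positivity
    set εu : ℝ := (1 + α) * μX with hεu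
    set εl : ℝ := (1 - α) * μX with hεl
    have hval : -t * εu + (t * μX + t ^ 2 * B2 / 8) = -(2 * α ^ 2 * μX ^ 2 / B2) := by
      rw [htdef, hεu]; field_simp; ring
    have hval2 : -(-t) * εl + ((-t) * μX + (-t) ^ 2 * B2 / 8) = -(2 * α ^ 2 * μX ^ 2 / B2) := by
      rw [htdef, hεl]; field_simp; ring
    have hup : (μ {ω | εu ≤ (∑ i, X i) ω}).toReal ≤ Real.exp (-(2 * α ^ 2 * μX ^ 2 / B2)) := by
      refine (measure_ge_le_exp_mul_mgf εu ht0.le (hexp_int t)).trans ?_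
      calc Real.exp (-t * εu) * mgf (∑ i, X i) μ t
          ≤ Real.exp (-t * εu) * Real.exp (t * μX + t ^ 2 * B2 / 8) := by
            exact mul_le_mul_of_nonneg_left (hmgf_le t) (Real.exp_pos _).le
        _ = Real.exp (-(2 * α ^ 2 * μX ^ 2 / B2)) := by rw [← Real.exp_add, hval]
    have hlo : (μ {ω | (∑ i, X i) ω ≤ εl}).toReal ≤ Real.exp (-(2 * α ^ 2 * μX ^ 2 / B2)) := by
      refine (measure_le_le_exp_mul_mgf εl (neg_nonpos.mpr ht0.le) (hexp_int (-t))).trans ?_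
      calc Real.exp (-(-t) * εl) * mgf (∑ i, X i) μ (-t)
          ≤ Real.exp (-(-t) * εl) * Real.exp ((-t) * μX + (-t) ^ 2 * B2 / 8) := by
            exact mul_le_mul_of_nonneg_left (hmgf_le (-t)) (Real.exp_pos _).le
        _ = Real.exp (-(2 * α ^ 2 * μX ^ 2 / B2)) := by rw [← Real.exp_add, hval2]
    have hexp_cmp : Real.exp (-(2 * α ^ 2 * μX ^ 2 / B2))
        ≤ Real.exp (-(2 * α ^ 2 * p * μX) / l) := by
      apply Real.exp_le_exp.mpr
      rw [neg_div, neg_le_neg_iff, div_le_div_iff₀ hl hB2pos]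
      have h2 : 0 ≤ 2 * α ^ 2 * p * μX := by positivity
      have h3 : 2 * α ^ 2 * μX ^ 2 * l = 2 * α ^ 2 * p * μX * (l * Sb) := by
        rw [hμX]; ring
      have h4 := mul_le_mul_of_nonneg_left hB2_le h2
      linarith
    have hsub : {ω | α * μX < |(∑ i, X i ω) - μX|} ⊆
        {ω | εu ≤ (∑ i, X i) ω} ∪ {ω | (∑ i, X i) ω ≤ εl} := by
      intro ω hω
      simp only [Set.mem_setOf_eq] at hω
      simp only [Set.mem_union, Set.mem_setOf_eq, Finset.sum_apply]
      rcases lt_abs.mp hω with h | h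
      · left; rw [hεu]; linarith
      · right; rw [hεl]; linarith
    have hbound : ∀ s : Set Ω, (μ s).toReal ≤ Real.exp (-(2 * α ^ 2 * μX ^ 2 / B2)) →
        μ s ≤ ENNReal.ofReal (Real.exp (-(2 * α ^ 2 * p * μX) / l)) := by
      intro s hs
      rw [ENNReal.le_ofReal_iff_toReal_le (measure_ne_top μ s) (Real.exp_pos _).le]
      exact hs.trans hexp_cmp
    calc μ {ω | α * μX < |(∑ i, X i ω) - μX|}
        ≤ μ ({ω | εu ≤ (∑ i, X i) ω} ∪ {ω | (∑ i, X i) ω ≤ εl}) := measure_mono hsub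
      _ ≤ μ {ω | εu ≤ (∑ i, X i) ω} + μ {ω | (∑ i, X i) ω ≤ εl} := measure_union_le _ _
      _ ≤ ENNReal.ofReal (Real.exp (-(2 * α ^ 2 * p * μX) / l))
          + ENNReal.ofReal (Real.exp (-(2 * α ^ 2 * p * μX) / l)) :=
            add_le_add (hbound _ hup) (hbound _ hlo)
      _ = ENNReal.ofReal (2 * Real.exp (-(2 * α ^ 2 * p * μX) / l)) := by
            rw [← ENNReal.ofReal_add (Real.exp_pos _).le (Real.exp_pos _).le]
            congr 1; ring
end

section
/- Let M be a finite set of items and let v_1,…,v_n be valuations on M (functions v_i : 2^M → ℝ with v_i(∅) = 0, monotone with respect to inclusion). Let T = (T_1,…,T_n) be an allocation supported by prices p' : M → ℝ≥0, i.e., for every bidder i and every subset B ⊆ T_i, v_i(B) ≥ Σ_{j∈B} p'_j. Then any outcome (S_1,…,S_n) of the fixed-price auction with prices p_j = p'_j/2, run on all n bidders in an arbitrary fixed order, satisfies Σ_i v_i(S_i) ≥ (Σ_{j ∈ ∪_i T_i} p'_j)/2. -/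
open Finset

/-- `IsFixedPriceOutcome M v p L S` says that the allocation `S` is an outcome of the
fixed-price auction with item prices `p` over the items `M`, run on the bidders listed in `L`
(in that order): bidders not in `L` get nothing, and each bidder in turn takes, among the items
still available, a bundle maximizing her value minus the posted prices. -/
def IsFixedPriceOutcome {ι : Type*} [DecidableEq ι] {n : ℕ} (M : Finset ι)
    (v : Fin n → Finset ι → ℝ) (p : ι → ℝ) (L : List (Fin n)) (S : Fin n → Finset ι) : Prop :=
  (∀ i, i ∉ L → S i = ∅) ∧
  ∀ t : Fin L.length,
    S (L.get t) ⊆ M \ ((L.take t).foldr (fun i acc => S i ∪ acc) ∅) ∧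
    ∀ B ⊆ M \ ((L.take t).foldr (fun i acc => S i ∪ acc) ∅),
      v (L.get t) B - ∑ j ∈ B, p j ≤ v (L.get t) (S (L.get t)) - ∑ j ∈ S (L.get t), p j

lemma mem_foldr_union {ι : Type*} [DecidableEq ι] {n : ℕ} (S : Fin n → Finset ι)
    (l : List (Fin n)) (j : ι) :
    j ∈ l.foldr (fun i acc => S i ∪ acc) ∅ ↔ ∃ i ∈ l, j ∈ S i := by
  induction l with
  | nil => simp
  | cons a l ih => simp [ih]

/-- **Lemma 4.2.** Let `T = (T 1, …, T n)` be an allocation supported by prices `p'`, i.e.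
`v i B ≥ ∑_{j ∈ B} p' j` for every bidder `i` and every `B ⊆ T i`.  Then any outcome
`(S 1, …, S n)` of the fixed-price auction with prices `p j = p' j / 2` run on all `n` bidders
in an arbitrary fixed order satisfies `∑ i, v i (S i) ≥ (∑_{j ∈ ⋃ i, T i} p' j) / 2`. -/
theorem stmt_2 {ι : Type*} [DecidableEq ι] {n : ℕ} (M : Finset ι)
    (v : Fin n → Finset ι → ℝ)
    (hv0 : ∀ i, v i ∅ = 0)
    (hvmono : ∀ i ⦃S T : Finset ι⦄, S ⊆ T → T ⊆ M → v i S ≤ v i T)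
    (T : Fin n → Finset ι) (hTM : ∀ i, T i ⊆ M)
    (hTdisj : ∀ i k, i ≠ k → Disjoint (T i) (T k))
    (p' : ι → ℝ) (hp' : ∀ j ∈ M, 0 ≤ p' j)
    (hsupp : ∀ i, ∀ B ⊆ T i, ∑ j ∈ B, p' j ≤ v i B)
    (L : List (Fin n)) (hnd : L.Nodup) (hall : ∀ i, i ∈ L)
    (S : Fin n → Finset ι)
    (hS : IsFixedPriceOutcome M v (fun j => p' j / 2) L S) :
    (∑ j ∈ Finset.univ.biUnion T, p' j) / 2 ≤ ∑ i, v i (S i) := by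
  obtain ⟨hSnot, hSmax⟩ := hS
  have hidx : ∀ i : Fin n, ∃ t : Fin L.length, L.get t = i := fun i =>
    List.mem_iff_get.1 (hall i)
  -- each S i ⊆ M
  have hSM : ∀ i, S i ⊆ M := by
    intro i
    obtain ⟨t, ht⟩ := hidx i
    have := (hSmax t).1
    rw [ht] at this
    exact this.trans (sdiff_subset)
  -- S is pairwise disjoint
  have hSdisj : ∀ i k : Fin n, i ≠ k → Disjoint (S i) (S k) := by
    have key : ∀ (t₁ t₂ : Fin L.length), (t₁ : ℕ) < (t₂ : ℕ) →
        Disjoint (S (L.get t₁)) (S (L.get t₂)) := by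
      intro t₁ t₂ hlt
      have h2 := (hSmax t₂).1
      rw [Finset.disjoint_left]
      intro j hj1 hj2
      have hjpre : j ∈ (L.take t₂).foldr (fun i acc => S i ∪ acc) ∅ := by
        rw [mem_foldr_union]
        refine ⟨L.get t₁, ?_, hj1⟩
        have : L.get t₁ = (L.take t₂).get ⟨t₁, by simp [hlt, t₁.2]⟩ := by
          simp [List.getElem_take]
        rw [this]; exact List.get_mem _ _
      have := h2 hj2
      rw [mem_sdiff] at this
      exact this.2 hjpre
    intro i k hik
    obtain ⟨t₁, ht₁⟩ := hidx i
    obtain ⟨t₂, ht₂⟩ := hidx k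
    have hne : (t₁ : ℕ) ≠ (t₂ : ℕ) := by
      intro h
      apply hik
      rw [← ht₁, ← ht₂]
      congr 1
      exact Fin.ext h
    rcases lt_or_gt_of_ne hne with h | h
    · rw [← ht₁, ← ht₂]; exact key t₁ t₂ h
    · rw [← ht₁, ← ht₂]; exact (key t₂ t₁ h).symm
  set SOLD : Finset ι := Finset.univ.biUnion S with hSOLD
  have hSOLDM : SOLD ⊆ M := by
    intro j hj
    rw [hSOLD, mem_biUnion] at hj
    obtain ⟨i, _, hji⟩ := hj
    exact hSM i hji
  -- key per-bidder bound
  have hkey : ∀ i : Fin n,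
      (∑ j ∈ S i, p' j) / 2 + (∑ j ∈ T i \ SOLD, p' j) / 2 ≤ v i (S i) := by
    intro i
    obtain ⟨t, ht⟩ := hidx i
    have hBsub : T i \ SOLD ⊆ M \ ((L.take t).foldr (fun i acc => S i ∪ acc) ∅) := by
      intro j hj
      rw [mem_sdiff] at hj ⊢
      refine ⟨hTM i hj.1, ?_⟩
      intro hjpre
      rw [mem_foldr_union] at hjpre
      obtain ⟨a, _, hja⟩ := hjpre
      exact hj.2 (mem_biUnion.2 ⟨a, mem_univ a, hja⟩)
    have hmax := (hSmax t).2 (T i \ SOLD) hBsub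
    rw [ht] at hmax
    have hsup := hsupp i (T i \ SOLD) sdiff_subset
    have e1 : ∑ j ∈ T i \ SOLD, p' j / 2 = (∑ j ∈ T i \ SOLD, p' j) / 2 := by
      rw [Finset.sum_div]
    have e2 : ∑ j ∈ S i, p' j / 2 = (∑ j ∈ S i, p' j) / 2 := by
      rw [Finset.sum_div]
    rw [e1, e2] at hmax
    linarith
  -- sum up
  have hsum1 : ∑ i, (∑ j ∈ S i, p' j) = ∑ j ∈ SOLD, p' j := by
    rw [hSOLD, Finset.sum_biUnion]
    intro i _ k _ hik
    exact hSdisj i k hik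
  have hsum2 : ∑ i, (∑ j ∈ T i \ SOLD, p' j)
      = ∑ j ∈ (Finset.univ.biUnion T) \ SOLD, p' j := by
    have : (Finset.univ.biUnion T) \ SOLD = Finset.univ.biUnion (fun i => T i \ SOLD) := by
      ext j
      simp only [mem_sdiff, mem_biUnion, mem_univ, true_and]
      tauto
    rw [this, Finset.sum_biUnion]
    intro i _ k _ hik
    exact Finset.disjoint_of_subset_left sdiff_subset
      (Finset.disjoint_of_subset_right sdiff_subset (hTdisj i k hik))
  have hfin : ∑ j ∈ Finset.univ.biUnion T, p' j
      ≤ ∑ j ∈ SOLD, p' j + ∑ j ∈ (Finset.univ.biUnion T) \ SOLD, p' j := by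
    have hsplit : ∑ j ∈ Finset.univ.biUnion T, p' j
        = ∑ j ∈ (Finset.univ.biUnion T) ∩ SOLD, p' j
          + ∑ j ∈ (Finset.univ.biUnion T) \ SOLD, p' j := by
      rw [Finset.sum_inter_add_sum_sdiff]
    have hle : ∑ j ∈ (Finset.univ.biUnion T) ∩ SOLD, p' j ≤ ∑ j ∈ SOLD, p' j := by
      apply Finset.sum_le_sum_of_subset_of_nonneg (Finset.inter_subset_right)
      intro j hj _
      exact hp' j (hSOLDM hj)
    linarith
  have htot : ∑ i, ((∑ j ∈ S i, p' j) / 2 + (∑ j ∈ T i \ SOLD, p' j) / 2)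
      ≤ ∑ i, v i (S i) := Finset.sum_le_sum (fun i _ => hkey i)
  rw [Finset.sum_add_distrib, ← Finset.sum_div, ← Finset.sum_div, hsum1, hsum2] at htot
  linarith
end

section
/- Let M be a finite set of items, v_1,…,v_n valuations on M, and N' ⊆ {1,…,n} a set of bidders. Let A = (A_1,…,A_n) be an allocation supported by prices q : M → ℝ≥0, let p : M → ℝ≥0 be item prices with q_j ≥ 2·p_j for every item j ∈ ∪_{i∈N'} A_i, and let (T_i)_{i∈N'} be an outcome of the fixed-price auction with prices p run on the bidders of N' in some fixed order. Let W = (∪_{i∈N'} A_i) ∖ (∪_{i∈N'} T_i) be the set of items allocated in A to bidders of N' but not allocated in the auction. Then Σ_{i∈N'} v_i(T_i) ≥ (Σ_{j∈W} q_j)/2. -/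
open Finset

/-- **Claim 4.4.** Let `A = (A 1, …, A n)` be an allocation supported by prices `q`, let `p` be
item prices with `q j ≥ 2 * p j` for every item `j ∈ ⋃_{i ∈ N'} A i`, and let `(T i)_{i ∈ N'}`
be an outcome of the fixed-price auction with prices `p` run on the bidders of `N'` in some
fixed order.  Let `W = (⋃_{i ∈ N'} A i) \ (⋃_{i ∈ N'} T i)` be the set of items allocated in
`A` to bidders of `N'` but not allocated in the auction.  Then
`∑_{i ∈ N'} v i (T i) ≥ (∑_{j ∈ W} q j) / 2`. -/
theorem stmt_3 {ι : Type*} [DecidableEq ι] {n : ℕ} (M : Finset ι)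
    (v : Fin n → Finset ι → ℝ)
    (hv0 : ∀ i, v i ∅ = 0)
    (hvmono : ∀ i ⦃S T : Finset ι⦄, S ⊆ T → T ⊆ M → v i S ≤ v i T)
    (A : Fin n → Finset ι) (hAM : ∀ i, A i ⊆ M)
    (hAdisj : ∀ i k, i ≠ k → Disjoint (A i) (A k))
    (q : ι → ℝ) (hq : ∀ j ∈ M, 0 ≤ q j)
    (hsupp : ∀ i, ∀ B ⊆ A i, ∑ j ∈ B, q j ≤ v i B)
    (N' : Finset (Fin n))
    (p : ι → ℝ) (hp : ∀ j ∈ M, 0 ≤ p j)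
    (hqp : ∀ j ∈ N'.biUnion A, 2 * p j ≤ q j)
    (L : List (Fin n)) (hnd : L.Nodup) (hLN : ∀ i, i ∈ L ↔ i ∈ N')
    (T : Fin n → Finset ι)
    (hT : IsFixedPriceOutcome M v p L T) :
    (∑ j ∈ N'.biUnion A \ N'.biUnion T, q j) / 2 ≤ ∑ i ∈ N', v i (T i) := by
  set W : Finset ι := N'.biUnion A \ N'.biUnion T with hW
  -- foldr of taken items over a sublist of L is inside the big union of T over N'
  have hfold : ∀ l : List (Fin n), (∀ k ∈ l, k ∈ N') →
      (l.foldr (fun i acc => T i ∪ acc) ∅) ⊆ N'.biUnion T := by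
    intro l
    induction l with
    | nil => intro _; simp
    | cons a l ih =>
      intro h
      simp only [List.foldr_cons]
      apply Finset.union_subset
      · exact Finset.subset_biUnion_of_mem T (h a (List.mem_cons_self (a := a) (l := l)))
      · exact ih fun k hk => h k (List.mem_cons_of_mem a hk)
  -- key per-bidder bound
  have key : ∀ i ∈ N', (∑ j ∈ A i ∩ W, q j) / 2 ≤ v i (T i) := by
    intro i hi
    have hiL : i ∈ L := (hLN i).mpr hi
    obtain ⟨t, ht⟩ := List.mem_iff_get.mp hiL
    obtain ⟨hsub, hmax⟩ := hT.2 t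
    rw [ht] at hsub hmax
    have hBsub : A i ∩ W ⊆ M \ ((L.take t).foldr (fun i acc => T i ∪ acc) ∅) := by
      intro j hj
      have hjA : j ∈ A i := Finset.mem_of_mem_inter_left hj
      have hjW : j ∈ W := Finset.mem_of_mem_inter_right hj
      rw [Finset.mem_sdiff]
      refine ⟨hAM i hjA, fun hjf => ?_⟩
      have : j ∈ N'.biUnion T :=
        hfold (L.take t) (fun k hk => (hLN k).mp (List.mem_of_mem_take hk)) hjf
      exact (Finset.mem_sdiff.mp hjW).2 this
    have h1 := hmax (A i ∩ W) hBsub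
    have hTM : T i ⊆ M := (hsub.trans (Finset.sdiff_subset))
    have hpT : 0 ≤ ∑ j ∈ T i, p j :=
      Finset.sum_nonneg fun j hj => hp j (hTM hj)
    have hqB : ∑ j ∈ A i ∩ W, q j ≤ v i (A i ∩ W) :=
      hsupp i _ (Finset.inter_subset_left)
    have hpB : ∑ j ∈ A i ∩ W, p j ≤ (∑ j ∈ A i ∩ W, q j) / 2 := by
      rw [Finset.sum_div]
      apply Finset.sum_le_sum
      intro j hj
      have : j ∈ N'.biUnion A :=
        (Finset.mem_sdiff.mp (Finset.mem_of_mem_inter_right hj)).1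
      linarith [hqp j this]
    linarith
  -- W is the disjoint union of the A i ∩ W
  have hWeq : W = N'.biUnion (fun i => A i ∩ W) := by
    apply Finset.Subset.antisymm
    · intro j hj
      obtain ⟨i, hi, hji⟩ := Finset.mem_biUnion.mp (Finset.mem_sdiff.mp hj).1
      exact Finset.mem_biUnion.mpr ⟨i, hi, Finset.mem_inter.mpr ⟨hji, hj⟩⟩
    · intro j hj
      obtain ⟨i, _, hji⟩ := Finset.mem_biUnion.mp hj
      exact Finset.mem_of_mem_inter_right hji
  have hsum : ∑ j ∈ W, q j = ∑ i ∈ N', ∑ j ∈ A i ∩ W, q j := by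
    conv_lhs => rw [hWeq]
    apply Finset.sum_biUnion
    intro a _ b _ hab
    exact ((hAdisj a b hab).mono Finset.inter_subset_left Finset.inter_subset_left)
  calc (∑ j ∈ W, q j) / 2 = ∑ i ∈ N', (∑ j ∈ A i ∩ W, q j) / 2 := by
        rw [hsum, Finset.sum_div]
    _ ≤ ∑ i ∈ N', v i (T i) := Finset.sum_le_sum key
end
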